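/- Let d ≥ 1, n ≥ 1, and 0 ≤ i ≤ d−1. In the expansion of p(n(X+1)−1) in the basis (−1)^i C(X+d−i, d−i), where p(X) = Σ_{i=0}^{d} (−1)^i e_i C(X+d−i, d−i), each coefficient e_i(I^n) is given by a polynomial expression in n of the form e_i(I^n) = Σ_{j=0}^{i} f_i^j(n)·e_j, where each f_i^j is a polynomial in n of degree d − j. -/

import Mathlib

open Polynomial Finset

noncomputable def Np (w : ℕ) : Polynomial ℚ :=
  Polynomial.C ((w.factorial : ℚ))⁻¹ * (ascPochhammer ℚ w).comp (Polynomial.X + 1)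

noncomputable def Dl (p : Polynomial ℚ) : Polynomial ℚ := p.comp (Polynomial.X + 1) - p

def Tst : ℕ → ℕ → ℤ
  | 0, 0 => 1
  | 0, _+1 => 0
  | _+1, 0 => 0
  | m+1, k+1 => Tst m k - (k+1) * Tst m (k+1)

noncomputable def phi (r : ℕ) (p : Polynomial ℚ) : ℚ := (Dl^[r] p).eval (-(r : ℚ) - 1)


lemma Np_zero : Np 0 = 1 := by simp [Np]

lemma Np_eval_nat (w x : ℕ) : (Np w).eval (x : ℚ) = ((x + w).choose w : ℚ) := by
  have h1 : ((x : ℚ) + 1) = ((x + 1 : ℕ) : ℚ) := by push_cast; ring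
  have h2 : (ascPochhammer ℚ w).eval ((x + 1 : ℕ) : ℚ)
      = (((ascPochhammer ℕ w).eval (x + 1) : ℕ) : ℚ) := (ascPochhammer_eval_cast ℚ w (x+1)).symm
  have h3 : (ascPochhammer ℕ w).eval (x + 1) = w.factorial * (x + w).choose w := by
    rw [ascPochhammer_nat_eq_ascFactorial, Nat.ascFactorial_eq_factorial_mul_choose]
  rw [Np, eval_mul, eval_C, eval_comp]
  simp only [eval_add, eval_X, eval_one, h1, h2, h3]
  push_cast
  rw [← mul_assoc, inv_mul_cancel₀ (by exact_mod_cast w.factorial_ne_zero), one_mul]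

lemma Np_eval_neg_one {w : ℕ} (hw : w ≠ 0) : (Np w).eval (-1) = 0 := by
  rw [Np, eval_mul, eval_comp]
  simp [ascPochhammer_eval_zero, hw]


lemma Dl_zero : Dl 0 = 0 := by simp [Dl]

lemma Dl_add (p q : Polynomial ℚ) : Dl (p + q) = Dl p + Dl q := by
  simp [Dl, add_comp]; ring

lemma Dl_C_mul (a : ℚ) (p : Polynomial ℚ) : Dl (Polynomial.C a * p) = Polynomial.C a * Dl p := by
  simp [Dl, mul_comp]; ring

lemma Dl_iter_zero (t : ℕ) : Dl^[t] 0 = 0 := Function.iterate_fixed Dl_zero t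

lemma Dl_iter_add (t : ℕ) (p q : Polynomial ℚ) : Dl^[t] (p + q) = Dl^[t] p + Dl^[t] q := by
  induction t generalizing p q with
  | zero => simp
  | succ t ih => simp only [Function.iterate_succ_apply, Dl_add, ih]

lemma Dl_iter_C_mul (t : ℕ) (a : ℚ) (p : Polynomial ℚ) :
    Dl^[t] (Polynomial.C a * p) = Polynomial.C a * Dl^[t] p := by
  induction t generalizing p with
  | zero => simp
  | succ t ih => simp only [Function.iterate_succ_apply, Dl_C_mul, ih]

lemma Dl_iter_sum {α : Type*} (t : ℕ) (s : Finset α) (f : α → Polynomial ℚ) :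
    Dl^[t] (∑ x ∈ s, f x) = ∑ x ∈ s, Dl^[t] (f x) := by
  classical
  induction s using Finset.induction_on with
  | empty => simp [Dl_iter_zero]
  | insert a s hx ih => rw [Finset.sum_insert hx, Finset.sum_insert hx, Dl_iter_add, ih]

lemma Dl_comp_shift (p : Polynomial ℚ) :
    Dl (p.comp (Polynomial.X + 1)) = (Dl p).comp (Polynomial.X + 1) := by
  simp [Dl, sub_comp, comp_assoc]

lemma Dl_iter_comp_shift (t : ℕ) (p : Polynomial ℚ) :
    Dl^[t] (p.comp (Polynomial.X + 1)) = (Dl^[t] p).comp (Polynomial.X + 1) := by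
  induction t generalizing p with
  | zero => simp
  | succ t ih => simp only [Function.iterate_succ_apply, Dl_comp_shift, ih]


lemma eq_of_nat_eval (p q : Polynomial ℚ) (h : ∀ x : ℕ, p.eval (x:ℚ) = q.eval (x:ℚ)) : p = q := by
  have hz : p - q = 0 := by
    apply Polynomial.eq_zero_of_infinite_isRoot
    apply Set.infinite_of_injective_forall_mem (f := fun x : ℕ => (x : ℚ))
      Nat.cast_injective
    intro x
    simp [Polynomial.IsRoot, h x]
  have := sub_eq_zero.mp hz
  exact this

lemma Dl_Np (w : ℕ) : Dl (Np (w + 1)) = (Np w).comp (Polynomial.X + 1) := by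
  apply eq_of_nat_eval
  intro x
  have hx1 : ((x : ℚ) + 1) = ((x + 1 : ℕ) : ℚ) := by push_cast; ring
  rw [Dl, eval_sub, eval_comp, eval_comp]
  simp only [eval_add, eval_X, eval_one, hx1, Np_eval_nat]
  have h := Nat.choose_succ_succ (x + w + 1) w
  have h1 : x + 1 + (w + 1) = x + w + 1 + 1 := by omega
  have h2 : x + (w + 1) = x + w + 1 := by omega
  have h3 : x + 1 + w = x + w + 1 := by omega
  rw [h1, h2, h3, h]
  push_cast; ring

lemma Dl_iter_Np (t w : ℕ) :
    Dl^[t] (Np (w + t)) = (Np w).comp (Polynomial.X + Polynomial.C (t : ℚ)) := by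
  induction t with
  | zero => simp
  | succ t ih =>
    rw [Function.iterate_succ_apply, show w + (t+1) = (w + t) + 1 from rfl, Dl_Np,
      Dl_iter_comp_shift, ih, comp_assoc]
    congr 1
    push_cast
    simp [add_comp]
    ring


lemma natDegree_comp_shift (p : Polynomial ℚ) :
    (p.comp (Polynomial.X + 1)).natDegree = p.natDegree := by
  rw [show (Polynomial.X + 1 : Polynomial ℚ) = Polynomial.X + Polynomial.C 1 by simp,
    ← taylor_apply, natDegree_taylor]

lemma Np_natDegree_le (w : ℕ) : (Np w).natDegree ≤ w := by
  refine le_trans (natDegree_mul_le) ?_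
  simp [natDegree_C, natDegree_comp_shift, ascPochhammer_natDegree]

lemma Np_coeff_self (w : ℕ) : (Np w).coeff w = ((w.factorial : ℚ))⁻¹ := by
  rw [Np, coeff_C_mul]
  have hm : ((ascPochhammer ℚ w).comp (Polynomial.X + 1)).Monic := by
    rw [show (Polynomial.X + 1 : Polynomial ℚ) = Polynomial.X + Polynomial.C 1 by simp]
    exact (monic_ascPochhammer ℚ w).comp_X_add_C 1
  have hd : ((ascPochhammer ℚ w).comp (Polynomial.X + 1)).natDegree = w := by
    rw [natDegree_comp_shift, ascPochhammer_natDegree]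
  have := hm.coeff_natDegree
  rw [hd] at this
  rw [this, mul_one]

lemma Dl_degree_lt (p : Polynomial ℚ) (hp : p ≠ 0) : (Dl p).degree < p.degree := by
  by_cases h0 : p.natDegree = 0
  · obtain ⟨a, rfl⟩ := natDegree_eq_zero.mp h0
    have : Dl (Polynomial.C a) = 0 := by simp [Dl]
    rw [this, degree_zero]
    exact Ne.bot_lt (by simpa [degree_eq_bot] using hp)
  · have hlc : (p.comp (Polynomial.X + 1)).leadingCoeff = p.leadingCoeff := by
      rw [leadingCoeff_comp (by simp [natDegree_X_add_C, show (Polynomial.X + 1 : Polynomial ℚ) = Polynomial.X + Polynomial.C 1 by simp])]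
      have : (Polynomial.X + 1 : Polynomial ℚ).leadingCoeff = 1 := by
        rw [show (Polynomial.X + 1 : Polynomial ℚ) = Polynomial.X + Polynomial.C 1 by simp]
        exact leadingCoeff_X_add_C 1
      simp [this]
    have hc0 : p.comp (Polynomial.X + 1) ≠ 0 := by
      intro h
      apply hp
      rw [← leadingCoeff_eq_zero, ← hlc, h, leadingCoeff_zero]
    have hdeg : (p.comp (Polynomial.X + 1)).degree = p.degree := by
      rw [degree_eq_natDegree hc0, degree_eq_natDegree hp, natDegree_comp_shift]
    have := degree_sub_lt hdeg hc0 hlc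
    rwa [hdeg] at this

lemma Dl_iter_eq_zero : ∀ (t : ℕ) (p : Polynomial ℚ), p.natDegree < t → Dl^[t] p = 0 := by
  intro t
  induction t with
  | zero => intro p hp; omega
  | succ t ih =>
    intro p hp
    rw [Function.iterate_succ_apply]
    by_cases hD : Dl p = 0
    · rw [hD, Dl_iter_zero]
    · have hp0 : p ≠ 0 := by rintro rfl; exact hD Dl_zero
      have := natDegree_lt_natDegree hD (Dl_degree_lt p hp0)
      exact ih _ (by omega)


lemma Tst_eq_zero : ∀ m k, m < k → Tst m k = 0 := by
  intro m
  induction m with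
  | zero => intro k hk; match k, hk with | k+1, _ => rfl
  | succ m ih =>
    intro k hk
    match k, hk with
    | k+1, hk =>
      show Tst m k - (k+1) * Tst m (k+1) = 0
      rw [ih k (by omega), ih (k+1) (by omega)]
      ring

lemma Tst_diag : ∀ m, Tst m m = 1 := by
  intro m
  induction m with
  | zero => rfl
  | succ m ih =>
    show Tst m m - (m+1) * Tst m (m+1) = 1
    rw [ih, Tst_eq_zero m (m+1) (by omega)]
    ring

lemma Tst_nonneg : ∀ m k, 0 ≤ (-1 : ℤ)^(m+k) * Tst m k := by
  intro m
  induction m with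
  | zero =>
    intro k
    match k with
    | 0 => norm_num [Tst]
    | k+1 => show (0:ℤ) ≤ _ * 0; simp
  | succ m ih =>
    intro k
    match k with
    | 0 => show (0:ℤ) ≤ _ * 0; simp [show Tst (m+1) 0 = 0 from rfl]
    | k+1 =>
      show 0 ≤ (-1 : ℤ)^(m+1+(k+1)) * (Tst m k - (k+1) * Tst m (k+1))
      have h1 := ih k
      have h2 := ih (k+1)
      have e1 : (-1 : ℤ)^(m+1+(k+1)) = (-1:ℤ)^(m+k) := by
        rw [show m+1+(k+1) = (m+k)+2 by omega, pow_add]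
        norm_num
      have e2 : (-1 : ℤ)^(m+(k+1)) = -(-1:ℤ)^(m+k) := by
        rw [show m+(k+1) = (m+k)+1 by omega, pow_succ]
        ring
      rw [e2] at h2
      rw [e1]
      nlinarith


lemma Tst_pos : ∀ m k, 1 ≤ k → k ≤ m → 0 < (-1 : ℤ)^(m+k) * Tst m k := by
  intro m
  induction m with
  | zero => intro k h1 h2; omega
  | succ m ih =>
    intro k h1 h2
    match k, h1 with
    | k+1, _ =>
      show 0 < (-1 : ℤ)^(m+1+(k+1)) * (Tst m k - (k+1) * Tst m (k+1))
      have e1 : (-1 : ℤ)^(m+1+(k+1)) = (-1:ℤ)^(m+k) := by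
        rw [show m+1+(k+1) = (m+k)+2 by omega, pow_add]; norm_num
      have e2 : (-1 : ℤ)^(m+(k+1)) = -(-1:ℤ)^(m+k) := by
        rw [show m+(k+1) = (m+k)+1 by omega, pow_succ]; ring
      rw [e1]
      rcases Nat.lt_or_ge k m with hkm | hkm
      · -- k + 1 ≤ m : strict from second term
        have h2' := ih (k+1) (by omega) (by omega)
        rw [e2] at h2'
        have h1' := Tst_nonneg m k
        nlinarith
      · -- k = m
        have : k = m := by omega
        subst this
        rw [Tst_diag, Tst_eq_zero k (k+1) (by omega)]
        have : (-1:ℤ)^(k+k) = 1 := by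
          rw [show k+k = 2*k by omega, pow_mul]; norm_num
        rw [this]; norm_num

lemma Tst_ne_zero (m k : ℕ) (h1 : 1 ≤ k) (h2 : k ≤ m) : (Tst m k : ℚ) ≠ 0 := by
  have hpos := Tst_pos m k h1 h2
  intro h
  have h0 : Tst m k = 0 := by exact_mod_cast h
  rw [h0, mul_zero] at hpos
  exact lt_irrefl 0 hpos

lemma Xpow_eq_sum_T (u : ℕ) :
    (Polynomial.X : Polynomial ℚ)^u
      = ∑ k ∈ Finset.range (u+1), Polynomial.C (Tst u k : ℚ) * ascPochhammer ℚ k := by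
  induction u with
  | zero => simp [Tst]
  | succ u ih =>
    have key : ∀ k : ℕ, Polynomial.X * ascPochhammer ℚ k
        = ascPochhammer ℚ (k+1) - Polynomial.C (k : ℚ) * ascPochhammer ℚ k := by
      intro k
      rw [ascPochhammer_succ_right]
      ring_nf
      rw [Polynomial.C_eq_natCast]
      ring
    rw [pow_succ, ih, Finset.sum_mul]
    have lhs_eq : ∑ k ∈ Finset.range (u+1),
        (Polynomial.C (Tst u k : ℚ) * ascPochhammer ℚ k) * Polynomial.X
        = (∑ k ∈ Finset.range (u+1), Polynomial.C (Tst u k : ℚ) * ascPochhammer ℚ (k+1))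
          - ∑ k ∈ Finset.range (u+1), Polynomial.C ((k : ℚ) * (Tst u k : ℚ)) * ascPochhammer ℚ k := by
      rw [← Finset.sum_sub_distrib]
      apply Finset.sum_congr rfl
      intro k _
      have := key k
      calc (Polynomial.C (Tst u k : ℚ) * ascPochhammer ℚ k) * Polynomial.X
          = Polynomial.C (Tst u k : ℚ) * (Polynomial.X * ascPochhammer ℚ k) := by ring
        _ = Polynomial.C (Tst u k : ℚ) * (ascPochhammer ℚ (k+1) - Polynomial.C (k : ℚ) * ascPochhammer ℚ k) := by rw [this]
        _ = _ := by rw [Polynomial.C_mul]; ring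
    rw [lhs_eq]
    -- now massage RHS
    rw [Finset.sum_range_succ' (fun k => Polynomial.C (Tst (u+1) k : ℚ) * ascPochhammer ℚ k) (u+1)]
    have hT0 : Tst (u+1) 0 = 0 := rfl
    rw [hT0]
    simp only [Int.cast_zero, Polynomial.C_0, zero_mul, add_zero]
    have step : ∀ k, Polynomial.C (Tst (u+1) (k+1) : ℚ) * ascPochhammer ℚ (k+1)
        = Polynomial.C (Tst u k : ℚ) * ascPochhammer ℚ (k+1)
          - Polynomial.C (((k:ℚ)+1) * (Tst u (k+1) : ℚ)) * ascPochhammer ℚ (k+1) := by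
      intro k
      have : Tst (u+1) (k+1) = Tst u k - (k+1) * Tst u (k+1) := rfl
      rw [this]
      push_cast
      simp only [Polynomial.C_sub, Polynomial.C_mul]
      ring
    rw [Finset.sum_congr rfl (fun k _ => step k), Finset.sum_sub_distrib]
    congr 1
    -- ∑_{k∈range(u+1)} C((k+1) * T u (k+1)) * P_{k+1} = ∑_{k∈range(u+1)} C(k * T u k) * P_k
    rw [Finset.sum_range_succ' (fun k => Polynomial.C ((k : ℚ) * (Tst u k : ℚ)) * ascPochhammer ℚ k) u]
    simp only [Nat.cast_zero, zero_mul, Polynomial.C_0, add_zero, Nat.cast_add, Nat.cast_one]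
    rw [Finset.sum_range_succ (fun k => Polynomial.C (((k:ℚ)+1) * (Tst u (k+1) : ℚ)) * ascPochhammer ℚ (k+1)) u]
    rw [Tst_eq_zero u (u+1) (by omega)]
    simp


lemma phi_C_mul (r : ℕ) (a : ℚ) (p : Polynomial ℚ) : phi r (Polynomial.C a * p) = a * phi r p := by
  rw [phi, phi, Dl_iter_C_mul, eval_mul, eval_C]

lemma phi_sum {α : Type*} (r : ℕ) (s : Finset α) (f : α → Polynomial ℚ) :
    phi r (∑ x ∈ s, f x) = ∑ x ∈ s, phi r (f x) := by
  rw [phi, Dl_iter_sum, eval_finset_sum]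
  rfl

lemma phi_Np (r w : ℕ) : phi r (Np w) = if w = r then 1 else 0 := by
  rcases Nat.lt_or_ge w r with h | h
  · rw [phi, Dl_iter_eq_zero r (Np w) (lt_of_le_of_lt (Np_natDegree_le w) h)]
    simp [Nat.ne_of_lt h]
  · obtain ⟨v, rfl⟩ : ∃ v, w = v + r := ⟨w - r, by omega⟩
    rw [phi, Dl_iter_Np, eval_comp]
    simp only [eval_add, eval_X, eval_C]
    rw [show -(r:ℚ) - 1 + r = -1 by ring]
    rcases Nat.eq_zero_or_pos v with rfl | hv
    · simp [Np_zero]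
    · rw [Np_eval_neg_one (by omega)]
      have : v + r ≠ r := by omega
      simp [this, hv.ne']

lemma phi_asc (r k : ℕ) :
    phi r ((ascPochhammer ℚ k).comp (Polynomial.X + 1))
      = if k = r then (r.factorial : ℚ) else 0 := by
  have hA : (ascPochhammer ℚ k).comp (Polynomial.X + 1)
      = Polynomial.C (k.factorial : ℚ) * Np k := by
    rw [Np, ← mul_assoc, ← Polynomial.C_mul,
      mul_inv_cancel₀ (by exact_mod_cast k.factorial_ne_zero), Polynomial.C_1, one_mul]
  rw [hA, phi_C_mul, phi_Np]
  by_cases h : k = r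
  · subst h; simp
  · simp [h]

lemma phi_X1_pow (r u : ℕ) :
    phi r ((Polynomial.X + 1 : Polynomial ℚ)^u) = (Tst u r : ℚ) * (r.factorial : ℚ) := by
  have h : (Polynomial.X + 1 : Polynomial ℚ)^u
      = ∑ k ∈ Finset.range (u+1),
          Polynomial.C (Tst u k : ℚ) * (ascPochhammer ℚ k).comp (Polynomial.X + 1) := by
    calc (Polynomial.X + 1 : Polynomial ℚ)^u
        = ((Polynomial.X : Polynomial ℚ)^u).comp (Polynomial.X + 1) := by
          rw [Polynomial.X_pow_comp]
      _ = _ := by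
          rw [Xpow_eq_sum_T]
          rw [Polynomial.sum_comp]
          apply Finset.sum_congr rfl
          intro k _
          rw [Polynomial.mul_comp, Polynomial.C_comp]
  rw [h, phi_sum]
  have : ∀ k ∈ Finset.range (u+1),
      phi r (Polynomial.C (Tst u k : ℚ) * (ascPochhammer ℚ k).comp (Polynomial.X + 1))
        = (Tst u k : ℚ) * (if k = r then (r.factorial : ℚ) else 0) := by
    intro k _
    rw [phi_C_mul, phi_asc]
  rw [Finset.sum_congr rfl this]
  rcases Nat.lt_or_ge r (u+1) with h' | h'
  · rw [Finset.sum_eq_single r]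
    · simp
    · intro k _ hk; simp [hk]
    · intro h''; exact absurd (Finset.mem_range.mpr h') h''
  · rw [Finset.sum_eq_zero, Tst_eq_zero u r (by omega)]
    · simp
    · intro k hk
      have : k ≠ r := by have := Finset.mem_range.mp hk; omega
      simp [this]


lemma comp_expand (m : ℕ) (c : ℚ) :
    (Np m).comp (Polynomial.C c * Polynomial.X + Polynomial.C (c-1)) =
      ∑ s ∈ Finset.range (m+1), ∑ u ∈ Finset.range (s+1),
        Polynomial.C ((Np m).coeff s * c^u * (-1:ℚ)^(s-u) * (s.choose u : ℚ))
          * (Polynomial.X + 1)^u := by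
  have hq : Polynomial.C c * Polynomial.X + Polynomial.C (c-1)
      = Polynomial.C c * (Polynomial.X + 1) + Polynomial.C (-1) := by
    rw [Polynomial.C_sub, Polynomial.C_neg, Polynomial.C_1]
    ring
  conv_lhs => rw [(Np m).as_sum_range' (m+1) (lt_of_le_of_lt (Np_natDegree_le m) m.lt_succ_self)]
  rw [Polynomial.sum_comp]
  apply Finset.sum_congr rfl
  intro s _
  rw [Polynomial.monomial_comp, hq, add_pow]
  rw [Finset.mul_sum]
  apply Finset.sum_congr rfl
  intro u _
  rw [mul_pow]
  have h1 : (Polynomial.C c)^u = Polynomial.C (c^u) := by rw [← Polynomial.C_pow]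
  have h2 : (Polynomial.C (-1 : ℚ))^(s-u) = Polynomial.C ((-1:ℚ)^(s-u)) := by
    rw [← Polynomial.C_pow]
  have h3 : ((s.choose u : ℕ) : Polynomial ℚ) = Polynomial.C ((s.choose u : ℕ) : ℚ) := by
    rw [Polynomial.C_eq_natCast]
  rw [h1, h2, h3]
  rw [Polynomial.C_mul, Polynomial.C_mul, Polynomial.C_mul]
  ring

lemma phi_comp (r m : ℕ) (c : ℚ) :
    phi r ((Np m).comp (Polynomial.C c * Polynomial.X + Polynomial.C (c-1))) =
      ∑ s ∈ Finset.range (m+1), ∑ u ∈ Finset.range (s+1),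
        (Np m).coeff s * c^u * (-1:ℚ)^(s-u) * (s.choose u : ℚ)
          * ((Tst u r : ℚ) * (r.factorial : ℚ)) := by
  rw [comp_expand, phi_sum]
  apply Finset.sum_congr rfl
  intro s _
  rw [phi_sum]
  apply Finset.sum_congr rfl
  intro u _
  rw [phi_C_mul, phi_X1_pow]

noncomputable def Fp (r m : ℕ) : Polynomial ℚ :=
  ∑ s ∈ Finset.range (m+1), ∑ u ∈ Finset.range (s+1),
    Polynomial.C ((Np m).coeff s * (-1:ℚ)^(s-u) * (s.choose u : ℚ)
      * ((Tst u r : ℚ) * (r.factorial : ℚ))) * Polynomial.X^u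

lemma Fp_eval (r m : ℕ) (c : ℚ) :
    (Fp r m).eval c = phi r ((Np m).comp (Polynomial.C c * Polynomial.X + Polynomial.C (c-1))) := by
  rw [phi_comp, Fp, eval_finset_sum]
  apply Finset.sum_congr rfl
  intro s _
  rw [eval_finset_sum]
  apply Finset.sum_congr rfl
  intro u _
  rw [eval_mul, eval_C, eval_pow, eval_X]
  ring

lemma Fp_coeff_top (r m : ℕ) :
    (Fp r m).coeff m = (m.factorial : ℚ)⁻¹ * ((Tst m r : ℚ) * (r.factorial : ℚ)) := by
  rw [Fp, finset_sum_coeff]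
  rw [Finset.sum_eq_single m]
  · rw [finset_sum_coeff]
    rw [Finset.sum_eq_single m]
    · rw [coeff_C_mul, coeff_X_pow, if_pos rfl, mul_one, Np_coeff_self]
      simp
    · intro u hu hum
      rw [coeff_C_mul, coeff_X_pow, if_neg (fun h => hum h.symm), mul_zero]
    · intro h; exact absurd (Finset.mem_range.mpr (by omega)) h
  · intro s hs hsm
    rw [finset_sum_coeff, Finset.sum_eq_zero]
    intro u hu
    have hu' : u < s + 1 := Finset.mem_range.mp hu
    have hs' : s < m + 1 := Finset.mem_range.mp hs
    have : m ≠ u := by omega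
    rw [coeff_C_mul, coeff_X_pow, if_neg this, mul_zero]
  · intro h; exact absurd (Finset.mem_range.mpr (by omega)) h

lemma Fp_degree (r m : ℕ) (h1 : 1 ≤ r) (h2 : r ≤ m) : (Fp r m).degree = (m : ℕ) := by
  have hub : (Fp r m).degree ≤ (m : ℕ) := by
    apply le_trans (Polynomial.degree_sum_le _ _)
    apply Finset.sup_le
    intro s hs
    apply le_trans (Polynomial.degree_sum_le _ _)
    apply Finset.sup_le
    intro u hu
    apply le_trans (Polynomial.degree_mul_le _ _)
    have hC : (Polynomial.C ((Np m).coeff s * (-1:ℚ)^(s-u) * (s.choose u : ℚ)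
        * ((Tst u r : ℚ) * (r.factorial : ℚ)))).degree ≤ 0 := Polynomial.degree_C_le
    have hX : ((Polynomial.X : Polynomial ℚ)^u).degree ≤ (m : ℕ) := by
      rw [Polynomial.degree_X_pow]
      exact_mod_cast Nat.cast_le.mpr (by
        have := Finset.mem_range.mp hu
        have := Finset.mem_range.mp hs
        omega)
    refine le_trans (add_le_add hC hX) (by simp)
  have hne : (Fp r m).coeff m ≠ 0 := by
    rw [Fp_coeff_top]
    apply mul_ne_zero
    · exact inv_ne_zero (by exact_mod_cast m.factorial_ne_zero)
    · exact mul_ne_zero (Tst_ne_zero m r h1 h2) (by exact_mod_cast r.factorial_ne_zero)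
  exact le_antisymm hub (Polynomial.le_degree_of_ne_zero hne)


theorem stmt_8 (d : ℕ) (hd : 1 ≤ d) (i : ℕ) (hi : i ≤ d - 1) :
    ∃ f : ℕ → Polynomial ℚ,
      (∀ j ≤ i, (f j).degree = (d - j : ℕ)) ∧
      ∀ (e : ℕ → ℤ) (n : ℕ), 1 ≤ n →
        ∀ g : ℕ → ℤ,
          (∀ X : ℕ,
            (∑ k ∈ Finset.range (d + 1),
                (-1 : ℤ) ^ k * g k * ((X + d - k).choose (d - k) : ℤ)) =
              ∑ k ∈ Finset.range (d + 1),
                (-1 : ℤ) ^ k * e k * ((n * (X + 1) - 1 + d - k).choose (d - k) : ℤ)) →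
          (g i : ℚ) = ∑ j ∈ Finset.range (i + 1), (f j).eval (n : ℚ) * (e j : ℚ) := by
  refine ⟨fun j => Polynomial.C ((-1:ℚ)^(i+j)) * Fp (d-i) (d-j), ?_, ?_⟩
  · intro j hj
    rw [Polynomial.degree_C_mul (pow_ne_zero _ (by norm_num : (-1:ℚ) ≠ 0))]
    exact Fp_degree (d-i) (d-j) (by omega) (by omega)
  · intro e n hn g hX
    set q : Polynomial ℚ := Polynomial.C (n:ℚ) * Polynomial.X + Polynomial.C ((n:ℚ)-1) with hq
    have hqdeg : q.natDegree ≤ 1 := natDegree_linear_le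
    have hPQ : (∑ k ∈ Finset.range (d+1), Polynomial.C ((-1:ℚ)^k * (g k : ℚ)) * Np (d-k))
        = ∑ k ∈ Finset.range (d+1), Polynomial.C ((-1:ℚ)^k * (e k : ℚ)) * ((Np (d-k)).comp q) := by
      apply eq_of_nat_eval
      intro x
      have hcast := congrArg (fun z : ℤ => (z : ℚ)) (hX x)
      push_cast at hcast
      rw [eval_finset_sum, eval_finset_sum]
      have hL : ∀ k ∈ Finset.range (d+1),
          Polynomial.eval (x:ℚ) (Polynomial.C ((-1:ℚ)^k * (g k : ℚ)) * Np (d-k))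
            = (-1:ℚ)^k * (g k : ℚ) * (((x + d - k).choose (d-k) : ℕ) : ℚ) := by
        intro k hk
        have hk' : k ≤ d := by have := Finset.mem_range.mp hk; omega
        rw [eval_mul, eval_C, Np_eval_nat]
        congr 3
        omega
      have hR : ∀ k ∈ Finset.range (d+1),
          Polynomial.eval (x:ℚ) (Polynomial.C ((-1:ℚ)^k * (e k : ℚ)) * ((Np (d-k)).comp q))
            = (-1:ℚ)^k * (e k : ℚ) * (((n * (x + 1) - 1 + d - k).choose (d-k) : ℕ) : ℚ) := by
        intro k hk
        have hk' : k ≤ d := by have := Finset.mem_range.mp hk; omega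
        rw [eval_mul, eval_C, eval_comp]
        have hqx : Polynomial.eval (x:ℚ) q = ((n * x + (n - 1) : ℕ) : ℚ) := by
          rw [hq]
          simp only [eval_add, eval_mul, eval_C, eval_X]
          push_cast [Nat.cast_sub hn]
          ring
        rw [hqx, Np_eval_nat]
        congr 3
        have hnx : n * (x+1) = n * x + n := by ring
        omega
      rw [Finset.sum_congr rfl hL, Finset.sum_congr rfl hR]
      exact_mod_cast hcast
    have hphi := congrArg (phi (d-i)) hPQ
    rw [phi_sum, phi_sum] at hphi
    have hL2 : ∑ k ∈ Finset.range (d+1),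
        phi (d-i) (Polynomial.C ((-1:ℚ)^k * (g k : ℚ)) * Np (d-k)) = (-1:ℚ)^i * (g i : ℚ) := by
      rw [Finset.sum_eq_single i]
      · rw [phi_C_mul, phi_Np, if_pos rfl, mul_one]
      · intro k hk hki
        have hk' : k ≤ d := by have := Finset.mem_range.mp hk; omega
        rw [phi_C_mul, phi_Np, if_neg (by omega), mul_zero]
      · intro h; exact absurd (Finset.mem_range.mpr (by omega)) h
    have hkill : ∀ k, i < k → k ≤ d → phi (d-i) ((Np (d-k)).comp q) = 0 := by
      intro k hik hkd
      have hdeg : ((Np (d-k)).comp q).natDegree < d - i := by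
        have h1 : ((Np (d-k)).comp q).natDegree ≤ (Np (d-k)).natDegree * q.natDegree :=
          natDegree_comp_le
        have h2 : (Np (d-k)).natDegree * q.natDegree ≤ (d-k) * 1 :=
          Nat.mul_le_mul (Np_natDegree_le _) hqdeg
        omega
      rw [phi, Dl_iter_eq_zero _ _ hdeg, eval_zero]
    have hR2 : ∑ k ∈ Finset.range (d+1),
        phi (d-i) (Polynomial.C ((-1:ℚ)^k * (e k : ℚ)) * ((Np (d-k)).comp q))
        = ∑ k ∈ Finset.range (i+1), (-1:ℚ)^k * (e k : ℚ) * phi (d-i) ((Np (d-k)).comp q) := by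
      rw [Finset.sum_congr rfl (fun k _ => phi_C_mul (d-i) _ _)]
      symm
      apply Finset.sum_subset
      · exact Finset.range_subset_range.mpr (by omega)
      · intro k hk1 hk2
        have h1 := Finset.mem_range.mp hk1
        have h2 : i < k := by by_contra h; exact hk2 (Finset.mem_range.mpr (by omega))
        rw [hkill k h2 (by omega), mul_zero]
    rw [hL2, hR2] at hphi
    have key : (g i : ℚ)
        = ∑ k ∈ Finset.range (i+1), (-1:ℚ)^(i+k) * (e k : ℚ) * phi (d-i) ((Np (d-k)).comp q) := by
      have := congrArg (fun z => (-1:ℚ)^i * z) hphi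
      rw [← mul_assoc, ← pow_add] at this
      have hpow : (-1:ℚ)^(i+i) = 1 := by
        rw [show i + i = 2*i by omega, pow_mul]; norm_num
      rw [hpow, one_mul] at this
      rw [this, Finset.mul_sum]
      apply Finset.sum_congr rfl
      intro k _
      rw [← mul_assoc, ← mul_assoc, ← pow_add]
    rw [key]
    apply Finset.sum_congr rfl
    intro j hj
    rw [eval_mul, eval_C, Fp_eval]
    ring
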